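/- Let x₁,…,x_N ∈ ℝ with N ≥ 2, and for k fixed let μ_N = (1/N)∑_{i=1}^N δ_{x_i} and μ_N^{−k} = (1/(N−1))∑_{i≠k} δ_{x_i}. Then W₁(μ_N, μ_N^{−k}) ≤ (2/(N−1))·(1/N)∑_{i=1}^N |x_i − x_k| ≤ (2/(N−1))·max_i |x_i − x_k|. -/

import Mathlib

open MeasureTheory
open scoped BigOperators

/-- Empirical measure `(1/|s|)∑_{i ∈ s} δ_{f(i)}` over a finite index set `s`. -/
noncomputable def empMeasureOn {α ι : Type*} [MeasurableSpace α] (s : Finset ι)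
    (f : ι → α) : Measure α :=
  (s.card : ENNReal)⁻¹ • ∑ i ∈ s, Measure.dirac (f i)

/-- The `1`-Wasserstein cost, defined as the infimum of the transport cost over
all couplings. -/
noncomputable def W1 {E : Type*} [MeasurableSpace E] [PseudoMetricSpace E]
    (μ ν : Measure E) : ℝ :=
  sInf {c : ℝ | ∃ γ : Measure (E × E),
    γ.map Prod.fst = μ ∧ γ.map Prod.snd = ν ∧ c = ∫ z, dist z.1 z.2 ∂γ}

lemma integrable_dirac_aux {α E : Type*} [MeasurableSpace α] [MeasurableSingletonClass α]
    [NormedAddCommGroup E] {f : α → E} (hf : StronglyMeasurable f) (a : α) :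
    Integrable f (Measure.dirac a) := by
  refine ⟨hf.aestronglyMeasurable, ?_⟩
  rw [HasFiniteIntegral, lintegral_dirac]
  exact ENNReal.coe_lt_top

lemma map_finset_sum_aux {α β ι : Type*} [MeasurableSpace α] [MeasurableSpace β]
    (s : Finset ι) (μ : ι → MeasureTheory.Measure α) {f : α → β} (hf : Measurable f) :
    (∑ i ∈ s, μ i).map f = ∑ i ∈ s, (μ i).map f := by
  classical
  induction s using Finset.induction with
  | empty => simp [Measure.map_zero]
  | insert _ _ h ih =>
    rw [Finset.sum_insert h, Finset.sum_insert h, Measure.map_add _ _ hf, ih]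

/-- leave-one-out estimate for empirical measures:
`W₁(μ_N, μ_N^{−k}) ≤ (2/(N−1))·(1/N)∑_i |x_i − x_k|`, and the latter is at most
`(2/(N−1))·M` for any bound `M ≥ |x_i − x_k|` for all `i`. -/
theorem stmt14 (N : ℕ) (hN : 2 ≤ N) (x : Fin N → ℝ) (k : Fin N) :
    W1 (empMeasureOn Finset.univ x) (empMeasureOn (Finset.univ.erase k) x) ≤
      (2 / ((N : ℝ) - 1)) * ((1 / N) * ∑ i, |x i - x k|) ∧
    ∀ M : ℝ, (∀ i, |x i - x k| ≤ M) →
      (2 / ((N : ℝ) - 1)) * ((1 / N) * ∑ i, |x i - x k|) ≤ (2 / ((N : ℝ) - 1)) * M := by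
  classical
  have hN1 : 1 ≤ N := le_trans (by norm_num) hN
  have hNR : (1 : ℝ) ≤ (N : ℝ) - 1 := by
    have : (2 : ℝ) ≤ N := by exact_mod_cast hN
    linarith
  constructor
  · -- main Wasserstein bound
    set m : ℕ := N - 1 with hm
    have hmcast : ((m : ℝ)) = (N : ℝ) - 1 := by
      rw [hm, Nat.cast_sub hN1]; norm_num
    have hm0 : ((m : ENNReal)) ≠ 0 := by
      simp only [ne_eq, Nat.cast_eq_zero, hm]
      omega
    have hmtop : ((m : ENNReal)) ≠ ⊤ := ENNReal.natCast_ne_top m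
    have hN0 : ((N : ENNReal)) ≠ 0 := by
      simp only [ne_eq, Nat.cast_eq_zero]; omega
    have hNtop : ((N : ENNReal)) ≠ ⊤ := ENNReal.natCast_ne_top N
    set c : ENNReal := ((N : ENNReal) * (m : ENNReal))⁻¹ with hc
    have hctop : c ≠ ⊤ := by
      rw [hc]
      simp [ENNReal.inv_ne_top, hN0, hm0]
    set γ : Measure (ℝ × ℝ) :=
      c • ∑ i ∈ Finset.univ.erase k,
        ((m : ENNReal) • Measure.dirac ((x i, x i) : ℝ × ℝ) + Measure.dirac ((x k, x i) : ℝ × ℝ))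
      with hγ
    have hcard : (Finset.univ.erase k).card = m := by
      rw [Finset.card_erase_of_mem (Finset.mem_univ k), Finset.card_univ, Fintype.card_fin]
    -- distance function is continuous
    have hdist : Continuous (fun z : ℝ × ℝ => dist z.1 z.2) :=
      continuous_fst.dist continuous_snd
    have hint : ∀ a : ℝ × ℝ, Integrable (fun z : ℝ × ℝ => dist z.1 z.2) (Measure.dirac a) :=
      fun a => integrable_dirac_aux hdist.stronglyMeasurable a
    have hintsum : ∀ i ∈ Finset.univ.erase k,
        Integrable (fun z : ℝ × ℝ => dist z.1 z.2)
          ((m : ENNReal) • Measure.dirac ((x i, x i) : ℝ × ℝ)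
            + Measure.dirac ((x k, x i) : ℝ × ℝ)) := by
      intro i _
      exact ((hint _).smul_measure hmtop).add_measure (hint _)
    -- first marginal
    have hfst : γ.map Prod.fst = empMeasureOn Finset.univ x := by
      rw [hγ, Measure.map_smul, map_finset_sum_aux _ _ measurable_fst]
      have h1 : ∀ i ∈ Finset.univ.erase k,
          (((m : ENNReal) • Measure.dirac ((x i, x i) : ℝ × ℝ)
            + Measure.dirac ((x k, x i) : ℝ × ℝ)).map Prod.fst)
          = (m : ENNReal) • Measure.dirac (x i) + Measure.dirac (x k) := by
        intro i _
        rw [Measure.map_add _ _ measurable_fst, Measure.map_smul,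
          Measure.map_dirac' measurable_fst, Measure.map_dirac' measurable_fst]
      rw [Finset.sum_congr rfl h1, Finset.sum_add_distrib, Finset.sum_const, hcard,
        ← Finset.smul_sum]
      have hconst : (m • Measure.dirac (x k) : Measure ℝ) = (m : ENNReal) • Measure.dirac (x k) :=
        (Nat.cast_smul_eq_nsmul ENNReal m _).symm
      rw [hconst, ← smul_add, smul_smul, hc]
      have hcc : ((N : ENNReal) * (m : ENNReal))⁻¹ * (m : ENNReal) = (N : ENNReal)⁻¹ := by
        rw [ENNReal.mul_inv (Or.inl hN0) (Or.inl hNtop), mul_assoc,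
          ENNReal.inv_mul_cancel hm0 hmtop, mul_one]
      rw [hcc]
      unfold empMeasureOn
      rw [Finset.card_univ, Fintype.card_fin]
      congr 1
      rw [← Finset.sum_erase_add _ _ (Finset.mem_univ k)]
    -- second marginal
    have hsnd : γ.map Prod.snd = empMeasureOn (Finset.univ.erase k) x := by
      rw [hγ, Measure.map_smul, map_finset_sum_aux _ _ measurable_snd]
      have h1 : ∀ i ∈ Finset.univ.erase k,
          (((m : ENNReal) • Measure.dirac ((x i, x i) : ℝ × ℝ)
            + Measure.dirac ((x k, x i) : ℝ × ℝ)).map Prod.snd)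
          = (N : ENNReal) • Measure.dirac (x i) := by
        intro i _
        rw [Measure.map_add _ _ measurable_snd, Measure.map_smul,
          Measure.map_dirac' measurable_snd, Measure.map_dirac' measurable_snd]
        have : (m : ENNReal) + 1 = (N : ENNReal) := by
          rw [← Nat.cast_one, ← Nat.cast_add]
          congr 1
          omega
        rw [← this, add_smul, one_smul]
      rw [Finset.sum_congr rfl h1, ← Finset.smul_sum, smul_smul, hc]
      have hcc : ((N : ENNReal) * (m : ENNReal))⁻¹ * (N : ENNReal) = (m : ENNReal)⁻¹ := by
        rw [ENNReal.mul_inv (Or.inl hN0) (Or.inl hNtop), mul_comm ((N:ENNReal))⁻¹ _,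
          mul_assoc, ENNReal.inv_mul_cancel hN0 hNtop, mul_one]
      rw [hcc]
      unfold empMeasureOn
      rw [hcard]
    -- the cost of γ
    have hcost : (∫ z, dist z.1 z.2 ∂γ)
        = c.toReal * ∑ i ∈ Finset.univ.erase k, |x k - x i| := by
      rw [hγ, integral_smul_measure, integral_finset_sum_measure hintsum]
      congr 1
      refine Finset.sum_congr rfl fun i _ => ?_
      rw [integral_add_measure ((hint _).smul_measure hmtop) (hint _),
        integral_smul_measure, integral_dirac, integral_dirac]
      simp [Real.dist_eq]
    have hctoReal : c.toReal = 1 / ((N : ℝ) * ((N : ℝ) - 1)) := by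
      rw [hc, ENNReal.toReal_inv, ENNReal.toReal_mul, ENNReal.toReal_natCast,
        ENNReal.toReal_natCast, hmcast, one_div]
    -- membership in the coupling set
    have hmem : (∫ z, dist z.1 z.2 ∂γ) ∈ {c : ℝ | ∃ γ : Measure (ℝ × ℝ),
        γ.map Prod.fst = empMeasureOn Finset.univ x ∧
        γ.map Prod.snd = empMeasureOn (Finset.univ.erase k) x ∧
        c = ∫ z, dist z.1 z.2 ∂γ} := ⟨γ, hfst, hsnd, rfl⟩
    have hbdd : BddBelow {c : ℝ | ∃ γ : Measure (ℝ × ℝ),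
        γ.map Prod.fst = empMeasureOn Finset.univ x ∧
        γ.map Prod.snd = empMeasureOn (Finset.univ.erase k) x ∧
        c = ∫ z, dist z.1 z.2 ∂γ} := by
      refine ⟨0, fun cc hcc => ?_⟩
      obtain ⟨γ', _, _, rfl⟩ := hcc
      exact integral_nonneg fun z => dist_nonneg
    have hle : W1 (empMeasureOn Finset.univ x) (empMeasureOn (Finset.univ.erase k) x)
        ≤ ∫ z, dist z.1 z.2 ∂γ := csInf_le hbdd hmem
    refine hle.trans ?_
    rw [hcost, hctoReal]
    have hsum : ∑ i ∈ Finset.univ.erase k, |x k - x i| = ∑ i, |x i - x k| := by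
      rw [← Finset.sum_erase_add _ _ (Finset.mem_univ k)]
      simp [abs_sub_comm]
    rw [hsum]
    have hS : (0 : ℝ) ≤ ∑ i, |x i - x k| := Finset.sum_nonneg fun i _ => abs_nonneg _
    have hNpos : (0 : ℝ) < (N : ℝ) := by positivity
    have h1 : (1 : ℝ) / ((N : ℝ) * ((N : ℝ) - 1)) ≤ 2 / ((N : ℝ) - 1) * (1 / N) := by
      rw [div_mul_div_comm, mul_one]
      rw [div_le_div_iff₀ (by positivity) (by positivity)]
      nlinarith
    calc 1 / ((N : ℝ) * ((N : ℝ) - 1)) * ∑ i, |x i - x k|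
        ≤ 2 / ((N : ℝ) - 1) * (1 / N) * ∑ i, |x i - x k| := by
          exact mul_le_mul_of_nonneg_right h1 hS
      _ = 2 / ((N : ℝ) - 1) * (1 / N * ∑ i, |x i - x k|) := by ring
  · intro M hM
    have hfrac : (0 : ℝ) ≤ 2 / ((N : ℝ) - 1) := by positivity
    refine mul_le_mul_of_nonneg_left ?_ hfrac
    have hsum : ∑ i, |x i - x k| ≤ ∑ _i : Fin N, M := Finset.sum_le_sum fun i _ => hM i
    rw [Finset.sum_const, Finset.card_univ, Fintype.card_fin, nsmul_eq_mul] at hsum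
    have hNpos : (0 : ℝ) < (N : ℝ) := by positivity
    rw [one_div, inv_mul_le_iff₀ hNpos]
    linarith [hsum]
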